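/- Let g₀, g₁ ∈ L¹(ℝ). Then the set P = { ( ∫ g₁(s)·δ(s) ds , ∫ g₀(s)·δ(s) ds ) : δ ∈ D } ⊆ ℝ² is convex and compact in the Euclidean topology on ℝ². -/

import Mathlib

open MeasureTheory Filter Topology

noncomputable section

/-- A classifier: a Lebesgue-measurable function `δ : ℝ → ℝ` with `0 ≤ δ s ≤ 1`
for Lebesgue-almost every `s`. -/
def IsClassifier (δ : ℝ → ℝ) : Prop :=
  Measurable δ ∧ ∀ᵐ s ∂(volume : Measure ℝ), 0 ≤ δ s ∧ δ s ≤ 1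

namespace NPaux

variable (g₀ g₁ : ℝ → ℝ)

def Pset : Set (ℝ × ℝ) :=
  {p | ∃ δ : ℝ → ℝ, IsClassifier δ ∧ p = (∫ s, g₁ s * δ s, ∫ s, g₀ s * δ s)}

def hfun (a b : ℝ) : ℝ → ℝ := fun s => a * g₁ s + b * g₀ s

def M (a b : ℝ) : ℝ := ∫ s, max (hfun g₀ g₁ a b s) 0

def Kset : Set (ℝ × ℝ) := {p | ∀ a b : ℝ, a * p.1 + b * p.2 ≤ M g₀ g₁ a b}

def limfun (a b v₁ v₂ : ℝ) : ℝ → ℝ := fun s =>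
  if 0 < hfun g₀ g₁ a b s then hfun g₀ g₁ v₁ v₂ s
  else if hfun g₀ g₁ a b s = 0 then max (hfun g₀ g₁ v₁ v₂ s) 0 else 0

variable {g₀ g₁}

lemma integrable_h (hg₀ : Integrable g₀ (volume : Measure ℝ))
    (hg₁ : Integrable g₁ (volume : Measure ℝ)) (a b : ℝ) :
    Integrable (hfun g₀ g₁ a b) (volume : Measure ℝ) :=
  ((hg₁.const_mul a).add (hg₀.const_mul b))

lemma integrable_hpos (hg₀ : Integrable g₀ (volume : Measure ℝ))
    (hg₁ : Integrable g₁ (volume : Measure ℝ)) (a b : ℝ) :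
    Integrable (fun s => max (hfun g₀ g₁ a b s) 0) (volume : Measure ℝ) :=
  (integrable_h hg₀ hg₁ a b).pos_part

lemma integrable_mul_classifier {g δ : ℝ → ℝ} (hg : Integrable g (volume : Measure ℝ))
    (hδ : IsClassifier δ) : Integrable (fun s => g s * δ s) (volume : Measure ℝ) := by
  have : Integrable (fun s => δ s * g s) (volume : Measure ℝ) := by
    refine hg.bdd_mul (c := 1) hδ.1.aestronglyMeasurable ?_
    filter_upwards [hδ.2] with s hs
    rw [Real.norm_eq_abs, abs_le]
    exact ⟨by linarith [hs.1], hs.2⟩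
  simpa [mul_comm] using this

lemma lin_integral {δ : ℝ → ℝ} (hg₀ : Integrable g₀ (volume : Measure ℝ))
    (hg₁ : Integrable g₁ (volume : Measure ℝ)) (hδ : IsClassifier δ) (a b : ℝ) :
    a * (∫ s, g₁ s * δ s) + b * (∫ s, g₀ s * δ s) = ∫ s, hfun g₀ g₁ a b s * δ s := by
  rw [← integral_const_mul, ← integral_const_mul,
    ← integral_add ((integrable_mul_classifier hg₁ hδ).const_mul a)
      ((integrable_mul_classifier hg₀ hδ).const_mul b)]
  congr 1; ext s; simp only [hfun]; ring

/-- P ⊆ K -/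
lemma Pset_subset_Kset (hg₀ : Integrable g₀ (volume : Measure ℝ))
    (hg₁ : Integrable g₁ (volume : Measure ℝ)) : Pset g₀ g₁ ⊆ Kset g₀ g₁ := by
  rintro p ⟨δ, hδ, rfl⟩
  intro a b
  rw [lin_integral hg₀ hg₁ hδ a b]
  refine integral_mono_ae (integrable_mul_classifier (integrable_h hg₀ hg₁ a b) hδ)
    (integrable_hpos hg₀ hg₁ a b) ?_
  filter_upwards [hδ.2] with s hs
  rcases le_or_gt 0 (hfun g₀ g₁ a b s) with h | h
  · have : hfun g₀ g₁ a b s * δ s ≤ hfun g₀ g₁ a b s * 1 :=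
      mul_le_mul_of_nonneg_left hs.2 h
    refine this.trans ?_
    rw [mul_one]; exact le_max_left _ _
  · exact (mul_nonpos_of_nonpos_of_nonneg h.le hs.1).trans (le_max_right _ _)

/-- convexity of P -/
lemma convex_Pset (hg₀ : Integrable g₀ (volume : Measure ℝ))
    (hg₁ : Integrable g₁ (volume : Measure ℝ)) : Convex ℝ (Pset g₀ g₁) := by
  rintro p ⟨δ₁, hδ₁, rfl⟩ q ⟨δ₂, hδ₂, rfl⟩ lam mu hlam hmu hlm
  refine ⟨fun s => lam * δ₁ s + mu * δ₂ s, ⟨?_, ?_⟩, ?_⟩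
  · exact ((hδ₁.1.const_mul lam).add (hδ₂.1.const_mul mu))
  · filter_upwards [hδ₁.2, hδ₂.2] with s h1 h2
    constructor
    · have := mul_nonneg hlam h1.1; have := mul_nonneg hmu h2.1; linarith
    · nlinarith [h1.1, h1.2, h2.1, h2.2]
  · have e : ∀ g : ℝ → ℝ, Integrable g (volume : Measure ℝ) →
        (∫ s, g s * (lam * δ₁ s + mu * δ₂ s))
          = lam * (∫ s, g s * δ₁ s) + mu * (∫ s, g s * δ₂ s) := by
      intro g hg
      rw [← integral_const_mul, ← integral_const_mul,
        ← integral_add ((integrable_mul_classifier hg hδ₁).const_mul lam)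
          ((integrable_mul_classifier hg hδ₂).const_mul mu)]
      congr 1; ext s; ring
    have e1 := e g₁ hg₁
    have e0 := e g₀ hg₀
    simp only [Prod.smul_mk, Prod.mk_add_mk, smul_eq_mul, Prod.mk.injEq]
    exact ⟨(e1).symm ▸ rfl, (e0).symm ▸ rfl⟩

/-- homogeneity -/
lemma M_smul (hg₀ : Integrable g₀ (volume : Measure ℝ))
    (hg₁ : Integrable g₁ (volume : Measure ℝ)) {c : ℝ} (hc : 0 ≤ c) (a b : ℝ) :
    M g₀ g₁ (c * a) (c * b) = c * M g₀ g₁ a b := by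
  unfold M
  rw [← integral_const_mul]
  congr 1; ext s
  have : hfun g₀ g₁ (c * a) (c * b) s = c * hfun g₀ g₁ a b s := by
    simp only [hfun]; ring
  rw [this]
  rw [mul_max_of_nonneg _ _ hc, mul_zero]

/-- Lipschitz-type bound -/
lemma M_sub_le (hg₀ : Integrable g₀ (volume : Measure ℝ))
    (hg₁ : Integrable g₁ (volume : Measure ℝ)) (a b a' b' : ℝ) :
    M g₀ g₁ a b - M g₀ g₁ a' b' ≤
      |a - a'| * (∫ s, |g₁ s|) + |b - b'| * (∫ s, |g₀ s|) := by
  have h1 : M g₀ g₁ a b - M g₀ g₁ a' b'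
      = ∫ s, (max (hfun g₀ g₁ a b s) 0 - max (hfun g₀ g₁ a' b' s) 0) := by
    rw [integral_sub ((integrable_h hg₀ hg₁ a b).pos_part)
      ((integrable_h hg₀ hg₁ a' b').pos_part)]; rfl
  rw [h1, ← integral_const_mul, ← integral_const_mul, ← integral_add
      (hg₁.abs.const_mul _) (hg₀.abs.const_mul _)]
  refine integral_mono_ae ((integrable_h hg₀ hg₁ a b).pos_part.sub
      (integrable_h hg₀ hg₁ a' b').pos_part)
    ((hg₁.abs.const_mul _).add (hg₀.abs.const_mul _)) ?_
  filter_upwards with s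
  have h2 : |max (hfun g₀ g₁ a b s) 0 - max (hfun g₀ g₁ a' b' s) 0|
      ≤ |hfun g₀ g₁ a b s - hfun g₀ g₁ a' b' s| := abs_max_sub_max_le_abs _ _ _
  have h3 : |hfun g₀ g₁ a b s - hfun g₀ g₁ a' b' s|
      ≤ |a - a'| * |g₁ s| + |b - b'| * |g₀ s| := by
    simp only [hfun]
    have : a * g₁ s + b * g₀ s - (a' * g₁ s + b' * g₀ s)
        = (a - a') * g₁ s + (b - b') * g₀ s := by ring
    rw [this]
    refine (abs_add_le _ _).trans ?_
    rw [abs_mul, abs_mul]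
  exact le_trans (le_trans (le_abs_self _) h2) h3

lemma tendsto_M (hg₀ : Integrable g₀ (volume : Measure ℝ))
    (hg₁ : Integrable g₁ (volume : Measure ℝ)) {u : ℕ → ℝ × ℝ} {v : ℝ × ℝ}
    (hu : Tendsto u atTop (𝓝 v)) :
    Tendsto (fun n => M g₀ g₁ (u n).1 (u n).2) atTop (𝓝 (M g₀ g₁ v.1 v.2)) := by
  have key : ∀ n, |M g₀ g₁ (u n).1 (u n).2 - M g₀ g₁ v.1 v.2|
      ≤ |(u n).1 - v.1| * (∫ s, |g₁ s|) + |(u n).2 - v.2| * (∫ s, |g₀ s|) := by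
    intro n
    rw [abs_le]
    constructor
    · have := M_sub_le hg₀ hg₁ v.1 v.2 (u n).1 (u n).2
      rw [abs_sub_comm v.1 _, abs_sub_comm v.2 _] at this
      linarith
    · exact (M_sub_le hg₀ hg₁ (u n).1 (u n).2 v.1 v.2)
  have h1 : Tendsto (fun n => (u n).1) atTop (𝓝 v.1) := (continuous_fst.tendsto v).comp hu
  have h2 : Tendsto (fun n => (u n).2) atTop (𝓝 v.2) := (continuous_snd.tendsto v).comp hu
  have hb : Tendsto (fun n => |(u n).1 - v.1| * (∫ s, |g₁ s|)
      + |(u n).2 - v.2| * (∫ s, |g₀ s|)) atTop (𝓝 0) := by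
    have : Tendsto (fun n => (u n).1 - v.1) atTop (𝓝 0) := by
      simpa using h1.sub (tendsto_const_nhds (x := v.1))
    have t1 : Tendsto (fun n => |(u n).1 - v.1|) atTop (𝓝 0) := by
      simpa using this.abs
    have : Tendsto (fun n => (u n).2 - v.2) atTop (𝓝 0) := by
      simpa using h2.sub (tendsto_const_nhds (x := v.2))
    have t2 : Tendsto (fun n => |(u n).2 - v.2|) atTop (𝓝 0) := by
      simpa using this.abs
    have := (t1.mul_const (∫ s, |g₁ s|)).add (t2.mul_const (∫ s, |g₀ s|))
    simpa using this
  have := squeeze_zero_norm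
    (f := fun n => M g₀ g₁ (u n).1 (u n).2 - M g₀ g₁ v.1 v.2)
    (fun n => by simpa [Real.norm_eq_abs] using key n) hb
  have := this.add (tendsto_const_nhds (x := M g₀ g₁ v.1 v.2))
  simpa using this

lemma isClosed_Kset : IsClosed (Kset g₀ g₁) := by
  have : Kset g₀ g₁ = ⋂ (a : ℝ), ⋂ (b : ℝ), {p : ℝ × ℝ | a * p.1 + b * p.2 ≤ M g₀ g₁ a b} := by
    ext p; simp [Kset, Set.mem_iInter]
  rw [this]
  exact isClosed_iInter fun a => isClosed_iInter fun b =>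
    isClosed_le (by fun_prop) continuous_const

lemma isCompact_Kset (hg₀ : Integrable g₀ (volume : Measure ℝ))
    (hg₁ : Integrable g₁ (volume : Measure ℝ)) : IsCompact (Kset g₀ g₁) := by
  refine Metric.isCompact_of_isClosed_isBounded isClosed_Kset ?_
  rw [Metric.isBounded_iff_subset_closedBall 0]
  refine ⟨max (max (M g₀ g₁ 1 0) (M g₀ g₁ (-1) 0)) (max (M g₀ g₁ 0 1) (M g₀ g₁ 0 (-1))), ?_⟩
  intro p hp
  simp only [Metric.mem_closedBall, dist_zero_right]
  rw [Prod.norm_def]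
  have h1 : p.1 ≤ M g₀ g₁ 1 0 := by simpa using hp 1 0
  have h2 : -p.1 ≤ M g₀ g₁ (-1) 0 := by have := hp (-1) 0; simp at this; linarith
  have h3 : p.2 ≤ M g₀ g₁ 0 1 := by simpa using hp 0 1
  have h4 : -p.2 ≤ M g₀ g₁ 0 (-1) := by have := hp 0 (-1); simp at this; linarith
  simp only [Real.norm_eq_abs, max_le_iff]
  constructor
  · have hl := le_max_left (M g₀ g₁ 1 0) (M g₀ g₁ (-1) 0)
    have hr := le_max_right (M g₀ g₁ 1 0) (M g₀ g₁ (-1) 0)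
    exact le_trans (abs_le.mpr ⟨by linarith, by linarith⟩ :
      |p.1| ≤ max (M g₀ g₁ 1 0) (M g₀ g₁ (-1) 0)) (le_max_left _ _)
  · have hl := le_max_left (M g₀ g₁ 0 1) (M g₀ g₁ 0 (-1))
    have hr := le_max_right (M g₀ g₁ 0 1) (M g₀ g₁ 0 (-1))
    exact le_trans (abs_le.mpr ⟨by linarith, by linarith⟩ :
      |p.2| ≤ max (M g₀ g₁ 0 1) (M g₀ g₁ 0 (-1))) (le_max_right _ _)

lemma measurable_h (m₀ : Measurable g₀) (m₁ : Measurable g₁) (a b : ℝ) :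
    Measurable (hfun g₀ g₁ a b) := ((m₁.const_mul a).add (m₀.const_mul b))

lemma key_bound (hg₀ : Integrable g₀ (volume : Measure ℝ))
    (hg₁ : Integrable g₁ (volume : Measure ℝ))
    (m₀ : Measurable g₀) (m₁ : Measurable g₁)
    {x : ℝ × ℝ} (hx : x ∈ Kset g₀ g₁) {a b : ℝ}
    (heq : a * x.1 + b * x.2 = M g₀ g₁ a b) (v₁ v₂ : ℝ) :
    v₁ * x.1 + v₂ * x.2 ≤ ∫ s, limfun g₀ g₁ a b v₁ v₂ s := by
  set h : ℝ → ℝ := hfun g₀ g₁ a b with hh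
  set k : ℝ → ℝ := hfun g₀ g₁ v₁ v₂ with hk
  set ε : ℕ → ℝ := fun n => 1 / (n + 1) with hε
  have hεpos : ∀ n, 0 < ε n := fun n => by positivity
  have hεlim : Tendsto ε atTop (𝓝 0) := tendsto_one_div_add_atTop_nhds_zero_nat
  set φ : ℕ → ℝ → ℝ := fun n s => (max (h s + ε n * k s) 0 - max (h s) 0) / ε n with hφ
  -- step 1 : the inequality for each n
  have ineq : ∀ n, v₁ * x.1 + v₂ * x.2 ≤ ∫ s, φ n s := by
    intro n
    have h0 := hx (a + ε n * v₁) (b + ε n * v₂)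
    have hM : M g₀ g₁ (a + ε n * v₁) (b + ε n * v₂) = ∫ s, max (h s + ε n * k s) 0 := by
      unfold M
      congr 1; ext s
      simp only [hh, hk, hfun]; ring_nf
    rw [hM] at h0
    have hint : (∫ s, φ n s)
        = ((∫ s, max (h s + ε n * k s) 0) - ∫ s, max (h s) 0) / ε n := by
      rw [← integral_sub, ← integral_div]
      · have hi : Integrable (fun s => h s + ε n * k s) (volume : Measure ℝ) := by
          have : (fun s => h s + ε n * k s) = hfun g₀ g₁ (a + ε n * v₁) (b + ε n * v₂) := by
            ext s; simp only [hh, hk, hfun]; ring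
          rw [this]; exact integrable_h hg₀ hg₁ _ _
        exact hi.pos_part
      · exact (integrable_h hg₀ hg₁ a b).pos_part
    rw [hint, le_div_iff₀ (hεpos n)]
    have hY : M g₀ g₁ a b = ∫ s, max (h s) 0 := rfl
    rw [hY] at heq
    nlinarith [h0, heq]
  -- step 2 : dominated convergence
  have meas_φ : ∀ n, AEStronglyMeasurable (φ n) (volume : Measure ℝ) := by
    intro n
    refine Measurable.aestronglyMeasurable ?_
    have mh : Measurable h := measurable_h m₀ m₁ a b
    have mk : Measurable k := measurable_h m₀ m₁ v₁ v₂
    fun_prop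
  have bound_φ : ∀ n, ∀ᵐ s ∂(volume : Measure ℝ), ‖φ n s‖ ≤ |k s| := by
    intro n
    filter_upwards with s
    have h1 : |max (h s + ε n * k s) 0 - max (h s) 0| ≤ |ε n * k s| := by
      have := abs_max_sub_max_le_abs (h s + ε n * k s) (h s) 0
      simpa using this
    rw [Real.norm_eq_abs, hφ]
    rw [abs_div, abs_of_pos (hεpos n), div_le_iff₀ (hεpos n)]
    rw [abs_mul, abs_of_pos (hεpos n)] at h1
    linarith [h1]
  have lim_φ : ∀ᵐ s ∂(volume : Measure ℝ),
      Tendsto (fun n => φ n s) atTop (𝓝 (limfun g₀ g₁ a b v₁ v₂ s)) := by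
    filter_upwards with s
    rcases lt_trichotomy (h s) 0 with hs | hs | hs
    · have hev : ∀ᶠ n in atTop, φ n s = 0 := by
        have : Tendsto (fun n => h s + ε n * k s) atTop (𝓝 (h s)) := by
          have := (hεlim.mul_const (k s)).const_add (h s)
          rw [zero_mul, add_zero] at this
          exact this
        filter_upwards [this.eventually (eventually_lt_nhds hs)] with n hn
        rw [hφ]
        simp only [max_eq_right hn.le, max_eq_right hs.le, sub_zero, zero_div, sub_self]
      have : limfun g₀ g₁ a b v₁ v₂ s = 0 := by
        simp only [limfun]
        rw [if_neg (by simpa [hh] using asymm hs), if_neg (by simpa [hh] using hs.ne)]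
      rw [this]
      exact Tendsto.congr' (hev.mono fun n hn => hn.symm) tendsto_const_nhds
    · have hev : ∀ n, φ n s = max (k s) 0 := by
        intro n
        simp only [hφ, hs, zero_add, max_eq_right le_rfl, sub_zero]
        rw [eq_comm, eq_div_iff (hεpos n).ne', mul_comm,
          mul_max_of_nonneg _ _ (hεpos n).le, mul_zero]
      have : limfun g₀ g₁ a b v₁ v₂ s = max (k s) 0 := by
        simp only [limfun]
        rw [if_neg (by simpa [hh] using not_lt.mpr hs.le), if_pos (by simpa [hh] using hs)]
      rw [this]
      exact Tendsto.congr (fun n => (hev n).symm) tendsto_const_nhds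
    · have hev : ∀ᶠ n in atTop, φ n s = k s := by
        have : Tendsto (fun n => h s + ε n * k s) atTop (𝓝 (h s)) := by
          have := (hεlim.mul_const (k s)).const_add (h s)
          rw [zero_mul, add_zero] at this
          exact this
        filter_upwards [this.eventually (eventually_gt_nhds hs)] with n hn
        simp only [hφ]
        rw [max_eq_left hn.le, max_eq_left hs.le, add_sub_cancel_left,
          mul_div_cancel_left₀ _ (hεpos n).ne']
      have : limfun g₀ g₁ a b v₁ v₂ s = k s := by
        simp only [limfun]
        rw [if_pos (by simpa [hh] using hs)]
      rw [this]
      exact Tendsto.congr' (hev.mono fun n hn => hn.symm) tendsto_const_nhds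
  have main := tendsto_integral_of_dominated_convergence (fun s => |k s|) meas_φ
    (integrable_h hg₀ hg₁ v₁ v₂).abs bound_φ lim_φ
  exact ge_of_tendsto main (Eventually.of_forall ineq)

lemma face_mem (hg₀ : Integrable g₀ (volume : Measure ℝ))
    (hg₁ : Integrable g₁ (volume : Measure ℝ))
    (m₀ : Measurable g₀) (m₁ : Measurable g₁)
    {x : ℝ × ℝ} (hx : x ∈ Kset g₀ g₁) {a b : ℝ} (hab : ¬(a = 0 ∧ b = 0))
    (heq : a * x.1 + b * x.2 = M g₀ g₁ a b) : x ∈ Pset g₀ g₁ := by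
  set h : ℝ → ℝ := hfun g₀ g₁ a b with hh
  set k : ℝ → ℝ := hfun g₀ g₁ (-b) a with hk
  have mh : Measurable h := measurable_h m₀ m₁ a b
  have mk : Measurable k := measurable_h m₀ m₁ (-b) a
  have ik : Integrable k (volume : Measure ℝ) := integrable_h hg₀ hg₁ (-b) a
  set A : Set ℝ := {s | 0 < h s} with hA
  set Bp : Set ℝ := {s | h s = 0 ∧ 0 < k s} with hBp
  set Bm : Set ℝ := {s | h s = 0 ∧ k s < 0} with hBm
  have mA : MeasurableSet A := measurableSet_lt measurable_const mh
  have mBp : MeasurableSet Bp :=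
    (measurableSet_eq_fun mh measurable_const).inter (measurableSet_lt measurable_const mk)
  have mBm : MeasurableSet Bm :=
    (measurableSet_eq_fun mh measurable_const).inter (measurableSet_lt mk measurable_const)
  set D : ℝ := a ^ 2 + b ^ 2 with hD
  have hDpos : 0 < D := by
    rcases not_and_or.mp hab with ha | hb
    · have : a ^ 2 > 0 := by positivity
      nlinarith [sq_nonneg b]
    · have : b ^ 2 > 0 := by positivity
      nlinarith [sq_nonneg a]
  -- pointwise identities on the zero set
  have hg₁Z : ∀ s, h s = 0 → D * g₁ s = -b * k s := by
    intro s hs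
    simp only [hh, hk, hfun] at hs ⊢
    rw [hD]; linear_combination a * hs
  have hg₀Z : ∀ s, h s = 0 → D * g₀ s = a * k s := by
    intro s hs
    simp only [hh, hk, hfun] at hs ⊢
    rw [hD]; linear_combination b * hs
  -- the base point q = (∫_A g₁, ∫_A g₀)
  set q1 : ℝ := ∫ s, A.indicator g₁ s with hq1
  set q0 : ℝ := ∫ s, A.indicator g₀ s with hq0
  have hMq : a * q1 + b * q0 = M g₀ g₁ a b := by
    rw [hq1, hq0, ← integral_const_mul, ← integral_const_mul,
      ← integral_add ((hg₁.indicator mA).const_mul a) ((hg₀.indicator mA).const_mul b)]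
    unfold M
    congr 1; ext s
    by_cases hs : s ∈ A
    · rw [Set.indicator_of_mem hs, Set.indicator_of_mem hs]
      have : 0 < h s := hs
      rw [max_eq_left this.le]
      simp only [hh, hfun]
      try ring
    · rw [Set.indicator_of_notMem hs, Set.indicator_of_notMem hs]
      have : ¬ 0 < h s := hs
      rw [max_eq_right (not_lt.mp this)]
      ring
  -- the defect c
  set c : ℝ := (-b) * (x.1 - q1) + a * (x.2 - q0) with hc
  -- bounds on c via key_bound
  set Ip : ℝ := ∫ s, Bp.indicator k s with hIp
  set Im : ℝ := ∫ s, Bm.indicator (fun s => - k s) s with hIm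
  have hIpnn : 0 ≤ Ip := by
    refine integral_nonneg fun s => ?_
    simp only [Pi.zero_apply]
    by_cases hs : s ∈ Bp
    · rw [Set.indicator_of_mem hs]; exact hs.2.le
    · rw [Set.indicator_of_notMem hs]
  have hImnn : 0 ≤ Im := by
    refine integral_nonneg fun s => ?_
    simp only [Pi.zero_apply]
    by_cases hs : s ∈ Bm
    · rw [Set.indicator_of_mem hs]; linarith [hs.2]
    · rw [Set.indicator_of_notMem hs]
  set IkA : ℝ := ∫ s, A.indicator k s with hIkA
  have bound1 : (-b) * x.1 + a * x.2 ≤ IkA + Ip := by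
    have := key_bound hg₀ hg₁ m₀ m₁ hx heq (-b) a
    have e : (∫ s, limfun g₀ g₁ a b (-b) a s) = IkA + Ip := by
      rw [hIkA, hIp, ← integral_add (ik.indicator mA) (ik.indicator mBp)]
      congr 1; ext s
      simp only [limfun, Set.indicator]
      by_cases h1 : 0 < h s
      · rw [if_pos h1]
        rw [if_pos (show s ∈ A from h1), if_neg (show s ∉ Bp from fun hmem => h1.ne' hmem.1)]
        simp only [hh, hk]
        ring
      · rw [if_neg h1, if_neg (show s ∉ A from h1)]
        by_cases h2 : h s = 0
        · rw [if_pos h2]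
          by_cases h3 : 0 < k s
          · rw [if_pos (show s ∈ Bp from ⟨h2, h3⟩), max_eq_left h3.le]
            simp only [hh, hk]; ring
          · rw [if_neg (show s ∉ Bp from fun hmem => h3 hmem.2), max_eq_right (not_lt.mp h3)]
            ring
        · rw [if_neg h2, if_neg (show s ∉ Bp from fun hmem => h2 hmem.1)]
          ring
    rw [← e]
    exact this
  have bound2 : b * x.1 + (-a) * x.2 ≤ -IkA + Im := by
    have := key_bound hg₀ hg₁ m₀ m₁ hx heq b (-a)
    have e : (∫ s, limfun g₀ g₁ a b b (-a) s) = -IkA + Im := by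
      have h1 : Integrable (fun s => -(A.indicator k s)) (volume : Measure ℝ) :=
        (ik.indicator mA).neg
      have h2 : Integrable (fun s => Bm.indicator (fun t => -k t) s) (volume : Measure ℝ) :=
        ik.neg.indicator mBm
      rw [hIkA, hIm, ← integral_neg, ← integral_add h1 h2]
      congr 1; ext s
      have hkneg : hfun g₀ g₁ b (-a) s = - k s := by
        simp only [hk, hfun]; ring
      simp only [limfun, Set.indicator, hkneg]
      by_cases h1 : 0 < h s
      · rw [if_pos h1, if_pos (show s ∈ A from h1),
          if_neg (show s ∉ Bm from fun hmem => h1.ne' hmem.1)]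
        ring
      · rw [if_neg h1, if_neg (show s ∉ A from h1)]
        by_cases h2 : h s = 0
        · rw [if_pos h2]
          by_cases h3 : k s < 0
          · rw [if_pos (show s ∈ Bm from ⟨h2, h3⟩), max_eq_left (by linarith : (0:ℝ) ≤ -k s)]
            ring
          · rw [if_neg (show s ∉ Bm from fun hmem => h3 hmem.2),
              max_eq_right (by linarith [not_lt.mp h3] : -k s ≤ 0)]
            ring
        · rw [if_neg h2, if_neg (show s ∉ Bm from fun hmem => h2 hmem.1)]
          ring
    rw [← e]
    exact this
  -- c is trapped
  have hqk : (-b) * q1 + a * q0 = IkA := by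
    rw [hq1, hq0, hIkA, ← integral_const_mul, ← integral_const_mul,
      ← integral_add ((hg₁.indicator mA).const_mul (-b)) ((hg₀.indicator mA).const_mul a)]
    congr 1; ext s
    simp only [Set.indicator]
    by_cases hs : s ∈ A
    · rw [if_pos hs, if_pos hs, if_pos hs]
      simp only [hk, hfun]
      try ring
    · rw [if_neg hs, if_neg hs, if_neg hs]; ring
  have hcub : c ≤ Ip := by rw [hc]; linarith [bound1, hqk]
  have hclb : -Im ≤ c := by rw [hc]; linarith [bound2, hqk]
  -- orthogonality: a * (x1 - q1) + b * (x2 - q0) = 0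
  have horth : a * (x.1 - q1) + b * (x.2 - q0) = 0 := by
    have := heq
    rw [← hMq] at this
    linarith
  -- components of x - q
  have hw1 : x.1 - q1 = c * (-b) / D := by
    rw [eq_div_iff hDpos.ne']
    rw [hc, hD]; linear_combination a * horth
  have hw0 : x.2 - q0 = c * a / D := by
    rw [eq_div_iff hDpos.ne']
    rw [hc, hD]; linear_combination b * horth
  -- the mixing weights
  set θp : ℝ := if Ip = 0 then 0 else max c 0 / Ip with hθp
  set θm : ℝ := if Im = 0 then 0 else max (-c) 0 / Im with hθm
  have hθp0 : 0 ≤ θp := by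
    rw [hθp]; split_ifs with hip
    · exact le_rfl
    · exact div_nonneg (le_max_right _ _) hIpnn
  have hθp1 : θp ≤ 1 := by
    rw [hθp]; split_ifs with hip
    · norm_num
    · rw [div_le_one (lt_of_le_of_ne hIpnn (Ne.symm hip))]
      exact max_le hcub (lt_of_le_of_ne hIpnn (Ne.symm hip)).le
  have hθm0 : 0 ≤ θm := by
    rw [hθm]; split_ifs with him
    · exact le_rfl
    · exact div_nonneg (le_max_right _ _) hImnn
  have hθm1 : θm ≤ 1 := by
    rw [hθm]; split_ifs with him
    · norm_num
    · rw [div_le_one (lt_of_le_of_ne hImnn (Ne.symm him))]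
      exact max_le (by linarith [hclb]) (lt_of_le_of_ne hImnn (Ne.symm him)).le
  have hθpIp : θp * Ip = max c 0 := by
    rw [hθp]; split_ifs with hip
    · have hc0 : c ≤ 0 := by rw [hip] at hcub; exact hcub
      rw [zero_mul, eq_comm, max_eq_right hc0]
    · rw [div_mul_cancel₀ _ hip]
  have hθmIm : θm * Im = max (-c) 0 := by
    rw [hθm]; split_ifs with him
    · have hc0 : -c ≤ 0 := by rw [him] at hclb; linarith
      rw [zero_mul, eq_comm, max_eq_right hc0]
    · rw [div_mul_cancel₀ _ him]
  have hsum : θp * Ip - θm * Im = c := by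
    rw [hθpIp, hθmIm]
    rcases le_total 0 c with h' | h'
    · rw [max_eq_left h', max_eq_right (by linarith)]; ring
    · rw [max_eq_right h', max_eq_left (by linarith)]; ring
  -- the classifier
  set δ : ℝ → ℝ := fun s => if 0 < h s then 1
    else if h s = 0 then (if 0 < k s then θp else if k s < 0 then θm else 0) else 0 with hδdef
  have mδ : Measurable δ := by
    refine Measurable.ite (measurableSet_lt measurable_const mh) measurable_const ?_
    refine Measurable.ite (measurableSet_eq_fun mh measurable_const) ?_ measurable_const
    refine Measurable.ite (measurableSet_lt measurable_const mk) measurable_const ?_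
    exact Measurable.ite (measurableSet_lt mk measurable_const) measurable_const
      measurable_const
  have hδcl : IsClassifier δ := by
    refine ⟨mδ, Filter.Eventually.of_forall fun s => ?_⟩
    simp only [hδdef]
    split_ifs
    · exact ⟨zero_le_one, le_rfl⟩
    · exact ⟨hθp0, hθp1⟩
    · exact ⟨hθm0, hθm1⟩
    · exact ⟨le_rfl, zero_le_one⟩
    · exact ⟨le_rfl, zero_le_one⟩
  -- decomposition of the payoff integrals
  have decomp : ∀ g : ℝ → ℝ, Integrable g (volume : Measure ℝ) →
      (∫ s, g s * δ s) = (∫ s, A.indicator g s) + θp * (∫ s, Bp.indicator g s)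
        + θm * (∫ s, Bm.indicator g s) := by
    intro g hg
    have i12 : Integrable (fun s => A.indicator g s + θp * Bp.indicator g s)
        (volume : Measure ℝ) := (hg.indicator mA).add ((hg.indicator mBp).const_mul θp)
    rw [← integral_const_mul θp, ← integral_const_mul θm,
      ← integral_add (hg.indicator mA) ((hg.indicator mBp).const_mul θp),
      ← integral_add i12 ((hg.indicator mBm).const_mul θm)]
    congr 1; ext s
    simp only [hδdef, Set.indicator]
    by_cases h1 : 0 < h s
    · rw [if_pos h1, if_pos (show s ∈ A from h1),
        if_neg (show s ∉ Bp from fun hm => h1.ne' hm.1),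
        if_neg (show s ∉ Bm from fun hm => h1.ne' hm.1)]
      ring
    · rw [if_neg h1, if_neg (show s ∉ A from h1)]
      by_cases h2 : h s = 0
      · rw [if_pos h2]
        by_cases h3 : 0 < k s
        · rw [if_pos h3, if_pos (show s ∈ Bp from ⟨h2, h3⟩),
            if_neg (show s ∉ Bm from fun hm => (asymm h3) hm.2)]
          ring
        · rw [if_neg h3, if_neg (show s ∉ Bp from fun hm => h3 hm.2)]
          by_cases h4 : k s < 0
          · rw [if_pos h4, if_pos (show s ∈ Bm from ⟨h2, h4⟩)]; ring
          · rw [if_neg h4, if_neg (show s ∉ Bm from fun hm => h4 hm.2)]; ring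
      · rw [if_neg h2, if_neg (show s ∉ Bp from fun hm => h2 hm.1),
          if_neg (show s ∉ Bm from fun hm => h2 hm.1)]
        ring
  -- set integrals of g₁, g₀ over subsets of the zero set are proportional to those of k
  have hprop : ∀ (S : Set ℝ), MeasurableSet S → (∀ s ∈ S, h s = 0) →
      (∫ s, S.indicator g₁ s) = -b / D * (∫ s, S.indicator k s)
      ∧ (∫ s, S.indicator g₀ s) = a / D * (∫ s, S.indicator k s) := by
    intro S mS hS
    constructor
    · rw [← integral_const_mul]
      congr 1; ext s
      by_cases hs : s ∈ S
      · rw [Set.indicator_of_mem hs, Set.indicator_of_mem hs]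
        have := hg₁Z s (hS s hs)
        rw [div_mul_eq_mul_div, eq_comm, div_eq_iff hDpos.ne']
        linarith [this]
      · rw [Set.indicator_of_notMem hs, Set.indicator_of_notMem hs, mul_zero]
    · rw [← integral_const_mul]
      congr 1; ext s
      by_cases hs : s ∈ S
      · rw [Set.indicator_of_mem hs, Set.indicator_of_mem hs]
        have := hg₀Z s (hS s hs)
        rw [div_mul_eq_mul_div, eq_comm, div_eq_iff hDpos.ne']
        linarith [this]
      · rw [Set.indicator_of_notMem hs, Set.indicator_of_notMem hs, mul_zero]
  have hpropBp := hprop Bp mBp (fun s hs => hs.1)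
  have hpropBm := hprop Bm mBm (fun s hs => hs.1)
  have hBmk : (∫ s, Bm.indicator k s) = -Im := by
    rw [hIm, ← integral_neg]
    congr 1; ext s
    by_cases hs : s ∈ Bm
    · rw [Set.indicator_of_mem hs, Set.indicator_of_mem hs]; ring
    · rw [Set.indicator_of_notMem hs, Set.indicator_of_notMem hs]; ring
  -- conclusion
  refine ⟨δ, hδcl, ?_⟩
  have e1 : (∫ s, g₁ s * δ s) = x.1 := by
    rw [decomp g₁ hg₁, hpropBp.1, hpropBm.1, hBmk, ← hq1]
    have : q1 + θp * (-b / D * Ip) + θm * (-b / D * -Im) = q1 + c * (-b) / D := by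
      field_simp
      linear_combination (-b) * hsum
    rw [hIp] at this
    rw [this]
    linarith [hw1]
  have e0 : (∫ s, g₀ s * δ s) = x.2 := by
    rw [decomp g₀ hg₀, hpropBp.2, hpropBm.2, hBmk, ← hq0]
    have : q0 + θp * (a / D * Ip) + θm * (a / D * -Im) = q0 + c * a / D := by
      field_simp
      linear_combination a * hsum
    rw [hIp] at this
    rw [this]
    linarith [hw0]
  rw [e1, e0]

lemma M_zero (hg₀ : Integrable g₀ (volume : Measure ℝ))
    (hg₁ : Integrable g₁ (volume : Measure ℝ)) : M g₀ g₁ 0 0 = 0 := by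
  have := M_smul hg₀ hg₁ (le_refl (0:ℝ)) 0 0
  simpa using this

lemma boundary_mem (hg₀ : Integrable g₀ (volume : Measure ℝ))
    (hg₁ : Integrable g₁ (volume : Measure ℝ))
    (m₀ : Measurable g₀) (m₁ : Measurable g₁)
    {z : ℝ × ℝ} (hz : z ∈ Kset g₀ g₁) (d : ℝ)
    (hd : ∀ ε : ℝ, 0 < ε → (z.1 + ε * d, z.2) ∉ Kset g₀ g₁) : z ∈ Pset g₀ g₁ := by
  set ε : ℕ → ℝ := fun n => 1 / (n + 1) with hε
  have hεpos : ∀ n, 0 < ε n := fun n => by positivity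
  have hεlim : Tendsto ε atTop (𝓝 0) := tendsto_one_div_add_atTop_nhds_zero_nat
  -- choose separating directions
  have sep : ∀ n : ℕ, ∃ u : ℝ × ℝ, ‖u‖ = 1 ∧
      M g₀ g₁ u.1 u.2 < u.1 * (z.1 + ε n * d) + u.2 * z.2 := by
    intro n
    have := hd (ε n) (hεpos n)
    simp only [Kset, Set.mem_setOf_eq, not_forall, not_le] at this
    obtain ⟨a, b, hab⟩ := this
    have habne : ¬(a = 0 ∧ b = 0) := by
      rintro ⟨rfl, rfl⟩
      rw [M_zero hg₀ hg₁] at hab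
      simp at hab
    set r : ℝ := max |a| |b| with hr
    have hrpos : 0 < r := by
      rcases not_and_or.mp habne with ha | hb
      · exact lt_max_of_lt_left (abs_pos.mpr ha)
      · exact lt_max_of_lt_right (abs_pos.mpr hb)
    refine ⟨(a / r, b / r), ?_, ?_⟩
    · rw [Prod.norm_def]
      simp only [Real.norm_eq_abs, abs_div, abs_of_pos hrpos]
      rw [max_div_div_right hrpos.le, ← hr, div_self hrpos.ne']
    · have h1 : M g₀ g₁ (a / r) (b / r) = (1 / r) * M g₀ g₁ a b := by
        have h2 : a / r = (1 / r) * a := by ring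
        have h3 : b / r = (1 / r) * b := by ring
        rw [h2, h3, M_smul hg₀ hg₁ (by positivity : (0:ℝ) ≤ 1 / r) a b]
      rw [h1]
      have hrinv : 0 < 1 / r := by positivity
      calc (1 / r) * M g₀ g₁ a b < (1 / r) * (a * (z.1 + ε n * d) + b * z.2) :=
            mul_lt_mul_of_pos_left hab hrinv
        _ = a / r * (z.1 + ε n * d) + b / r * z.2 := by ring
  choose u hu1 hu2 using sep
  have husph : ∀ n, u n ∈ Metric.sphere (0 : ℝ × ℝ) 1 := by
    intro n; rw [Metric.mem_sphere, dist_zero_right]; exact hu1 n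
  obtain ⟨v, hvmem, φ, hφmono, hφtend⟩ :=
    (isCompact_sphere (0 : ℝ × ℝ) 1).tendsto_subseq husph
  have hvnorm : ‖v‖ = 1 := by
    rw [Metric.mem_sphere, dist_zero_right] at hvmem; exact hvmem
  have hvne : ¬(v.1 = 0 ∧ v.2 = 0) := by
    rintro ⟨h1, h2⟩
    have : v = 0 := Prod.ext h1 h2
    rw [this, norm_zero] at hvnorm
    norm_num at hvnorm
  -- limits
  have hM : Tendsto (fun n => M g₀ g₁ (u (φ n)).1 (u (φ n)).2) atTop
      (𝓝 (M g₀ g₁ v.1 v.2)) := tendsto_M hg₀ hg₁ hφtend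
  have hεφ : Tendsto (fun n => ε (φ n)) atTop (𝓝 0) :=
    hεlim.comp hφmono.tendsto_atTop
  have h1 : Tendsto (fun n => (u (φ n)).1) atTop (𝓝 v.1) :=
    (continuous_fst.tendsto v).comp hφtend
  have h2 : Tendsto (fun n => (u (φ n)).2) atTop (𝓝 v.2) :=
    (continuous_snd.tendsto v).comp hφtend
  have hRHS : Tendsto (fun n => (u (φ n)).1 * (z.1 + ε (φ n) * d) + (u (φ n)).2 * z.2)
      atTop (𝓝 (v.1 * z.1 + v.2 * z.2)) := by
    have : Tendsto (fun n => z.1 + ε (φ n) * d) atTop (𝓝 z.1) := by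
      have := (hεφ.mul_const d).const_add z.1
      rw [zero_mul, add_zero] at this
      exact this
    have := (h1.mul this).add (h2.mul_const z.2)
    exact this
  have hle : M g₀ g₁ v.1 v.2 ≤ v.1 * z.1 + v.2 * z.2 :=
    le_of_tendsto_of_tendsto' hM hRHS fun n => (hu2 (φ n)).le
  have hge : v.1 * z.1 + v.2 * z.2 ≤ M g₀ g₁ v.1 v.2 := hz v.1 v.2
  exact face_mem hg₀ hg₁ m₀ m₁ hz hvne (le_antisymm hge hle)

lemma Kset_subset_Pset (hg₀ : Integrable g₀ (volume : Measure ℝ))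
    (hg₁ : Integrable g₁ (volume : Measure ℝ))
    (m₀ : Measurable g₀) (m₁ : Measurable g₁) : Kset g₀ g₁ ⊆ Pset g₀ g₁ := by
  intro p hp
  set T : Set ℝ := {t : ℝ | (p.1 + t, p.2) ∈ Kset g₀ g₁} with hT
  have hT0 : (0:ℝ) ∈ T := by
    simp only [hT, Set.mem_setOf_eq, add_zero]
    exact hp
  have hTne : T.Nonempty := ⟨0, hT0⟩
  have hTclosed : IsClosed T :=
    IsClosed.preimage (by fun_prop) (isClosed_Kset (g₀ := g₀) (g₁ := g₁))
  obtain ⟨R, hR⟩ := ((isCompact_Kset hg₀ hg₁).isBounded).subset_closedBall 0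
  have hTsub : T ⊆ Set.Icc (-R - p.1) (R - p.1) := by
    intro t ht
    have := hR ht
    rw [Metric.mem_closedBall, dist_zero_right, Prod.norm_def] at this
    have h1 : |p.1 + t| ≤ R := le_trans (le_max_left _ _) (by
      simpa [Real.norm_eq_abs] using this)
    rw [abs_le] at h1
    constructor <;> linarith [h1.1, h1.2]
  have hTcomp : IsCompact T :=
    (isCompact_Icc).of_isClosed_subset hTclosed hTsub
  set tp : ℝ := sSup T with htp
  set tm : ℝ := sInf T with htm
  have htpmem : tp ∈ T := hTcomp.sSup_mem hTne
  have htmmem : tm ∈ T := hTcomp.sInf_mem hTne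
  have htp0 : 0 ≤ tp := le_csSup hTcomp.bddAbove hT0
  have htm0 : tm ≤ 0 := csInf_le hTcomp.bddBelow hT0
  have hzp : ((p.1 + tp, p.2) : ℝ × ℝ) ∈ Pset g₀ g₁ := by
    refine boundary_mem hg₀ hg₁ m₀ m₁ htpmem 1 ?_
    intro e he hmem
    have : tp + e ∈ T := by
      simp only [hT, Set.mem_setOf_eq]
      have : p.1 + tp + e * 1 = p.1 + (tp + e) := by ring
      rw [← this]
      exact hmem
    have := le_csSup hTcomp.bddAbove this
    linarith
  have hzm : ((p.1 + tm, p.2) : ℝ × ℝ) ∈ Pset g₀ g₁ := by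
    refine boundary_mem hg₀ hg₁ m₀ m₁ htmmem (-1) ?_
    intro e he hmem
    have : tm - e ∈ T := by
      simp only [hT, Set.mem_setOf_eq]
      have : p.1 + tm + e * (-1) = p.1 + (tm - e) := by ring
      rw [← this]
      exact hmem
    have := csInf_le hTcomp.bddBelow this
    linarith
  by_cases hdeg : tp - tm = 0
  · have : tp = 0 := by linarith
    have hp2 : p = (p.1 + tp, p.2) := by
      rw [this]; simp
    rw [hp2]
    exact hzp
  · have hΔ : 0 < tp - tm := by
      rcases lt_or_gt_of_ne hdeg with h | h
      · linarith
      · linarith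
    have hcomb := convex_Pset hg₀ hg₁ hzm hzp
      (a := tp / (tp - tm)) (b := -tm / (tp - tm))
      (div_nonneg htp0 hΔ.le) (div_nonneg (by linarith) hΔ.le)
      (by rw [← add_div, div_eq_one_iff_eq hΔ.ne']; ring)
    have : (tp / (tp - tm)) • ((p.1 + tm, p.2) : ℝ × ℝ)
        + (-tm / (tp - tm)) • ((p.1 + tp, p.2) : ℝ × ℝ) = p := by
      apply Prod.ext
      · simp only [Prod.smul_mk, Prod.mk_add_mk, smul_eq_mul]
        field_simp
        ring
      · simp only [Prod.smul_mk, Prod.mk_add_mk, smul_eq_mul]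
        field_simp
        ring
    rw [this] at hcomb
    exact hcomb


end NPaux

/-- For `g₀, g₁ ∈ L¹(ℝ)`, the set
`P = {(∫ g₁ δ, ∫ g₀ δ) : δ a classifier} ⊆ ℝ²` is convex and compact in the
Euclidean topology on `ℝ²`. -/
theorem achievable_rates_convex_compact (g₀ g₁ : ℝ → ℝ)
    (hg₀ : Integrable g₀ (volume : Measure ℝ)) (hg₁ : Integrable g₁ (volume : Measure ℝ)) :
    Convex ℝ {p : ℝ × ℝ | ∃ δ : ℝ → ℝ, IsClassifier δ ∧
        p = (∫ s, g₁ s * δ s, ∫ s, g₀ s * δ s)} ∧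
    IsCompact {p : ℝ × ℝ | ∃ δ : ℝ → ℝ, IsClassifier δ ∧
        p = (∫ s, g₁ s * δ s, ∫ s, g₀ s * δ s)} := by
  set g₀' : ℝ → ℝ := hg₀.1.mk g₀ with hg₀'def
  set g₁' : ℝ → ℝ := hg₁.1.mk g₁ with hg₁'def
  have m₀ : Measurable g₀' := hg₀.1.stronglyMeasurable_mk.measurable
  have m₁ : Measurable g₁' := hg₁.1.stronglyMeasurable_mk.measurable
  have e₀ : g₀ =ᵐ[(volume : Measure ℝ)] g₀' := hg₀.1.ae_eq_mk
  have e₁ : g₁ =ᵐ[(volume : Measure ℝ)] g₁' := hg₁.1.ae_eq_mk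
  have hg₀' : Integrable g₀' (volume : Measure ℝ) := hg₀.congr e₀
  have hg₁' : Integrable g₁' (volume : Measure ℝ) := hg₁.congr e₁
  have hP : {p : ℝ × ℝ | ∃ δ : ℝ → ℝ, IsClassifier δ ∧
      p = (∫ s, g₁ s * δ s, ∫ s, g₀ s * δ s)} = NPaux.Pset g₀' g₁' := by
    ext p
    simp only [NPaux.Pset, Set.mem_setOf_eq]
    refine exists_congr fun δ => and_congr_right fun hδ => ?_
    have i1 : (∫ s, g₁ s * δ s) = ∫ s, g₁' s * δ s :=
      integral_congr_ae (by filter_upwards [e₁] with s hs; rw [hs])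
    have i0 : (∫ s, g₀ s * δ s) = ∫ s, g₀' s * δ s :=
      integral_congr_ae (by filter_upwards [e₀] with s hs; rw [hs])
    rw [i1, i0]
  rw [hP]
  refine ⟨NPaux.convex_Pset hg₀' hg₁', ?_⟩
  have hPK : NPaux.Pset g₀' g₁' = NPaux.Kset g₀' g₁' :=
    Set.Subset.antisymm (NPaux.Pset_subset_Kset hg₀' hg₁')
      (NPaux.Kset_subset_Pset hg₀' hg₁' m₀ m₁)
  rw [hPK]
  exact NPaux.isCompact_Kset hg₀' hg₁'

end
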